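/- Language of the replay strategy. Let Cap be a type with decidable equality and let π : List (Finset Cap) be a capability history of length n. Consider the DFA over the alphabet Finset Cap with state type Option (Fin (n+1)) (none a rejecting sink), start state some 0, accepting states all states of the form some i, and transition function: at state some i with i < n, reading the (i+1)-th entry of π leads to some (i+1) and reading any other letter leads to none; at state some n, reading the empty set ∅ loops to some n and reading any other letter leads to none; at none every letter stays at none. Then for every word w : List (Finset Cap), the DFA accepts w if and only if w is a prefix of π, or w = π ++ List.replicate m ∅ for some natural number m. -/

import Mathlib

/-- Transition function of the replay-strategy DFA for a history `π`.
States `some i` for `i : Fin (π.length + 1)` track progress through `π`; `none` is a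
rejecting sink. -/
def replayStep {Cap : Type*} [DecidableEq Cap] (π : List (Finset Cap)) :
    Option (Fin (π.length + 1)) → Finset Cap → Option (Fin (π.length + 1))
  | none, _ => none
  | some i, a =>
    if h : (i : ℕ) < π.length then
      -- at state `some i` with `i < n`: reading the (i+1)-th entry of π advances
      if a = π.get ⟨i, h⟩ then some ⟨(i : ℕ) + 1, by omega⟩ else none
    else
      -- at state `some n`: only the empty set loops
      if a = ∅ then some i else none

/-- The replay-strategy DFA for a history `π`. -/
def replayDFA {Cap : Type*} [DecidableEq Cap] (π : List (Finset Cap)) :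
    DFA (Finset Cap) (Option (Fin (π.length + 1))) where
  step := replayStep π
  start := some ⟨0, by omega⟩
  accept := Set.range some

private lemma replay_none {Cap : Type*} [DecidableEq Cap] (π : List (Finset Cap))
    (w : List (Finset Cap)) : (replayDFA π).evalFrom none w = none := by
  induction w with
  | nil => rfl
  | cons a w ih => simpa [DFA.evalFrom, replayDFA, replayStep] using ih

private lemma replay_key {Cap : Type*} [DecidableEq Cap] (π : List (Finset Cap))
    (w : List (Finset Cap)) : ∀ i : Fin (π.length + 1),
    ((replayDFA π).evalFrom (some i) w ∈ Set.range some ↔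
      (w <+: π.drop i) ∨ ∃ m : ℕ, w = π.drop i ++ List.replicate m ∅) := by
  induction w with
  | nil =>
    intro i
    simp only [DFA.evalFrom, List.foldl_nil, Set.mem_range, exists_apply_eq_apply, true_iff]
    exact Or.inl (List.nil_prefix)
  | cons a w ih =>
    intro i
    by_cases h : (i : ℕ) < π.length
    · have hdrop : π.drop i = π.get ⟨i, h⟩ :: π.drop (i + 1) :=
        (List.drop_eq_getElem_cons h).trans rfl
      by_cases ha : a = π.get ⟨i, h⟩
      · have hstep : (replayDFA π).step (some i) a = some ⟨(i : ℕ) + 1, by omega⟩ := by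
          simp [replayDFA, replayStep, h, ha]
        rw [DFA.evalFrom, List.foldl_cons, show (replayDFA π).step (some i) a
            = (replayDFA π).step (some i) a from rfl, hstep]
        rw [show List.foldl (replayDFA π).step (some ⟨(i:ℕ)+1, by omega⟩) w
            = (replayDFA π).evalFrom (some ⟨(i:ℕ)+1, by omega⟩) w from rfl,
          ih ⟨(i:ℕ)+1, by omega⟩]
        constructor
        · rintro (hp | ⟨m, hm⟩)
          · refine Or.inl ?_
            rw [hdrop, ha]
            exact List.cons_prefix_cons.mpr ⟨rfl, by simpa using hp⟩
          · refine Or.inr ⟨m, ?_⟩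
            rw [hdrop, ha]
            simp only [Fin.val_mk] at hm
            rw [hm, List.cons_append]
        · rintro (hp | ⟨m, hm⟩)
          · rw [hdrop, ha] at hp
            exact Or.inl (by simpa using (List.cons_prefix_cons.mp hp).2)
          · rw [hdrop] at hm
            simp only [List.cons_append, List.cons.injEq] at hm
            exact Or.inr ⟨m, by simpa using hm.2⟩
      · have hstep : (replayDFA π).step (some i) a = none := by
          simp only [replayDFA, replayStep, dif_pos h, if_neg ha]
        rw [DFA.evalFrom, List.foldl_cons, hstep,
          show List.foldl (replayDFA π).step none w
            = (replayDFA π).evalFrom none w from rfl, replay_none]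
        simp only [Set.mem_range, reduceCtorEq, exists_false, false_iff]
        push_neg
        constructor
        · intro hp
          rw [hdrop] at hp
          exact ha ((List.cons_prefix_cons.mp hp).1.trans (by simp [List.get_eq_getElem]))
        · intro m hm
          rw [hdrop] at hm
          simp only [List.cons_append, List.cons.injEq] at hm
          exact ha (hm.1.trans (by simp [List.get_eq_getElem]))
    · have hi : (i : ℕ) = π.length := by omega
      have hdrop : π.drop i = [] := by simp [hi]
      by_cases ha : a = ∅
      · have hstep : (replayDFA π).step (some i) a = some i := by
          simp [replayDFA, replayStep, h, ha]
        rw [DFA.evalFrom, List.foldl_cons, hstep,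
          show List.foldl (replayDFA π).step (some i) w
            = (replayDFA π).evalFrom (some i) w from rfl, ih i]
        rw [hdrop]
        simp only [List.nil_append, List.prefix_nil]
        constructor
        · rintro (rfl | ⟨m, rfl⟩)
          · exact Or.inr ⟨1, by simp [ha]⟩
          · exact Or.inr ⟨m + 1, by simp [ha, List.replicate_succ]⟩
        · rintro (h' | ⟨m, hm⟩)
          · exact absurd h' (by simp)
          · cases m with
            | zero => simp at hm
            | succ m =>
              rw [List.replicate_succ] at hm
              simp only [List.cons.injEq] at hm
              exact Or.inr ⟨m, hm.2⟩
      · have hstep : (replayDFA π).step (some i) a = none := by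
          simp [replayDFA, replayStep, h, ha]
        rw [DFA.evalFrom, List.foldl_cons, hstep,
          show List.foldl (replayDFA π).step none w
            = (replayDFA π).evalFrom none w from rfl, replay_none]
        rw [hdrop]
        simp only [Set.mem_range, reduceCtorEq, exists_false, false_iff,
          List.prefix_nil, List.nil_append]
        push_neg
        refine ⟨by simp, fun m hm => ?_⟩
        cases m with
        | zero => simp at hm
        | succ m =>
          rw [List.replicate_succ] at hm
          simp only [List.cons.injEq] at hm
          exact ha hm.1

theorem replayDFA_language {Cap : Type*} [DecidableEq Cap] (π : List (Finset Cap))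
    (w : List (Finset Cap)) :
    w ∈ (replayDFA π).accepts ↔
      (w <+: π) ∨ ∃ m : ℕ, w = π ++ List.replicate m ∅ := by
  have := replay_key π w ⟨0, by omega⟩
  simp [DFA.accepts, DFA.acceptsFrom, DFA.mem_accepts, replayDFA] at this ⊢
  exact this
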